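/- arXiv:2204.14212 — 2 statements merged into one kernel-verified Lean document; each statement's English description precedes it below -/
import Mathlib

section
/- Let G and H be digraphs such that min{χ_a(G), χ_a(H)} = χ_a(G) and χ_a(G) ≤ 2. Then χ_a(G × H) = χ_a(G), where G × H is the direct product. -/
/-- A directed cycle in the digraph with arc relation `Adj`: a list of at least two
distinct vertices with an arc between consecutive vertices and an arc from the last
vertex back to the first. -/
def IsDicycle {V : Type*} (Adj : V → V → Prop) (l : List V) : Prop :=
  2 ≤ l.length ∧ l.Nodup ∧ l.Chain' Adj ∧
    ∀ h : l ≠ [], Adj (l.getLast h) (l.head h)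

/-- A set of vertices is acyclic if the induced subdigraph contains no directed cycle. -/
def AcyclicSet {V : Type*} (Adj : V → V → Prop) (S : Set V) : Prop :=
  ¬ ∃ l : List V, (∀ v ∈ l, v ∈ S) ∧ IsDicycle Adj l

/-- A coloring is acyclic if every color class is an acyclic set. -/
def IsAcyclicColoring {V C : Type*} (Adj : V → V → Prop) (f : V → C) : Prop :=
  ∀ c : C, AcyclicSet Adj (f ⁻¹' {c})

/-- The dichromatic number: the least `k` admitting an acyclic `k`-coloring. -/
noncomputable def dichromaticNumber {V : Type*} (Adj : V → V → Prop) : ℕ :=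
  sInf {k : ℕ | ∃ f : V → Fin k, IsAcyclicColoring Adj f}

/-- Cartesian product of digraphs. -/
def cartAdj {V W : Type*} (GA : V → V → Prop) (HA : W → W → Prop) :
    V × W → V × W → Prop :=
  fun p q => (p.1 = q.1 ∧ HA p.2 q.2) ∨ (GA p.1 q.1 ∧ p.2 = q.2)

/-- Direct product of digraphs. -/
def directAdj {V W : Type*} (GA : V → V → Prop) (HA : W → W → Prop) :
    V × W → V × W → Prop :=
  fun p q => GA p.1 q.1 ∧ HA p.2 q.2

/-- Strong product of digraphs. -/
def strongAdj {V W : Type*} (GA : V → V → Prop) (HA : W → W → Prop) :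
    V × W → V × W → Prop :=
  fun p q => (p.1 = q.1 ∧ HA p.2 q.2) ∨ (GA p.1 q.1 ∧ p.2 = q.2) ∨
    (GA p.1 q.1 ∧ HA p.2 q.2)

/-- Lexicographic product of digraphs. -/
def lexAdj {V W : Type*} (GA : V → V → Prop) (HA : W → W → Prop) :
    V × W → V × W → Prop :=
  fun p q => GA p.1 q.1 ∨ (p.1 = q.1 ∧ HA p.2 q.2)

/-- The dicycle on `n` vertices: arcs `i → i + 1` on `ZMod n`. -/
def dicycleAdj (n : ℕ) : ZMod n → ZMod n → Prop := fun i j => j = i + 1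

/-- The complete digraph on `k` vertices. -/
def completeAdj (k : ℕ) : Fin k → Fin k → Prop := fun i j => i ≠ j

private lemma exists_dup {V : Type*} : ∀ l : List V, ¬ l.Nodup →
    ∃ (a : List V) (x : V) (b c : List V), l = a ++ x :: (b ++ x :: c) := by
  intro l
  induction l with
  | nil => intro h; exact absurd List.nodup_nil h
  | cons y t ih =>
    intro h
    rw [List.nodup_cons] at h
    push_neg at h
    by_cases hy : y ∈ t
    · obtain ⟨b, c, rfl⟩ := List.append_of_mem hy
      exact ⟨[], y, b, c, rfl⟩
    · obtain ⟨a, x, b, c, rfl⟩ := ih (h hy)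
      exact ⟨y :: a, x, b, c, rfl⟩

private lemma closedWalk_to_dicycle {V : Type*} {Adj : V → V → Prop}
    (hirr : Irreflexive Adj) (S : Set V) :
    ∀ n : ℕ, ∀ l : List V, l.length ≤ n → 2 ≤ l.length → (∀ v ∈ l, v ∈ S) →
      l.Chain' Adj → (∀ h : l ≠ [], Adj (l.getLast h) (l.head h)) →
      ∃ l', (∀ v ∈ l', v ∈ S) ∧ IsDicycle Adj l' := by
  intro n
  induction n with
  | zero => intro l hn h2 _ _ _; omega
  | succ n ih =>
    intro l hn h2 hS hchain hclose
    by_cases hnd : l.Nodup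
    · exact ⟨l, hS, h2, hnd, hchain, hclose⟩
    · obtain ⟨a, x, b, c, rfl⟩ := exists_dup l hnd
      have heq : a ++ x :: (b ++ x :: c) = a ++ ((x :: b) ++ (x :: c)) := by simp
      rw [heq] at hchain
      have h1 := (List.isChain_append.mp hchain).2
      have h2' := (List.isChain_append.mp h1.1).1
      have h3 := (List.isChain_append.mp h1.1).2.2
      have hxbne : (x :: b) ≠ [] := List.cons_ne_nil _ _
      have hcl : Adj ((x :: b).getLast hxbne) x :=
        h3 _ (by rw [List.getLast?_eq_getLast hxbne]; rfl) x rfl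
      have hbne : b ≠ [] := by
        rintro rfl
        simp only [List.getLast_singleton] at hcl
        exact hirr x hcl
      refine ih (x :: b) ?_ ?_ ?_ h2' ?_
      · have := List.length_pos_iff.mpr (fun h => hbne (by simpa using h))
        simp only [List.length_append, List.length_cons] at hn ⊢
        omega
      · have := List.length_pos_iff.mpr hbne
        simp only [List.length_cons]; omega
      · intro v hv
        apply hS
        simp only [List.mem_append, List.mem_cons] at hv ⊢
        tauto
      · intro _
        simpa using hcl

private lemma acyclicSet_of_subsingleton {V : Type*} {Adj : V → V → Prop} {S : Set V}
    (hS : S.Subsingleton) : AcyclicSet Adj S := by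
  rintro ⟨l, hlS, hlen, hnd, -⟩
  match l, hlen, hnd, hlS with
  | v :: w :: t, _, hnd, hlS =>
    have hvw : v ≠ w := by
      simp only [List.nodup_cons, List.mem_cons] at hnd
      tauto
    exact hvw (hS (hlS v (by simp)) (hlS w (by simp)))

private lemma IsAcyclicColoring.comp_inj {V C D : Type*} {Adj : V → V → Prop}
    {f : V → C} (hf : IsAcyclicColoring Adj f) {g : C → D} (hg : Function.Injective g) :
    IsAcyclicColoring Adj (g ∘ f) := by
  intro d
  rintro ⟨l, hlS, hl⟩
  have hne : l ≠ [] := by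
    have := hl.1; intro h; rw [h] at this; simp at this
  apply hf (f (l.head hne))
  refine ⟨l, ?_, hl⟩
  intro v hv
  have h1 : g (f v) = d := hlS v hv
  have h2 : g (f (l.head hne)) = d := hlS _ (List.head_mem hne)
  exact hg (h1.trans h2.symm)

private lemma colorSet_nonempty {V : Type*} [Fintype V] (Adj : V → V → Prop) :
    {k : ℕ | ∃ f : V → Fin k, IsAcyclicColoring Adj f}.Nonempty := by
  refine ⟨Fintype.card V, Fintype.equivFin V, fun c => acyclicSet_of_subsingleton ?_⟩
  intro u hu v hv
  exact (Fintype.equivFin V).injective (Set.mem_singleton_iff.mp hu |>.trans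
    (Set.mem_singleton_iff.mp hv).symm)

private lemma dichromatic_le_iff {V : Type*} [Fintype V] {Adj : V → V → Prop} {k : ℕ} :
    dichromaticNumber Adj ≤ k ↔ ∃ f : V → Fin k, IsAcyclicColoring Adj f := by
  constructor
  · intro h
    obtain ⟨f, hf⟩ := Nat.sInf_mem (colorSet_nonempty Adj)
    exact ⟨Fin.castLE h ∘ f, hf.comp_inj (Fin.castLE_injective h)⟩
  · rintro ⟨f, hf⟩
    exact Nat.sInf_le ⟨f, hf⟩

private lemma dichromatic_le_zero_iff {V : Type*} [Fintype V] {Adj : V → V → Prop} :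
    dichromaticNumber Adj ≤ 0 ↔ IsEmpty V := by
  rw [dichromatic_le_iff]
  constructor
  · rintro ⟨f, -⟩; exact ⟨fun v => (f v).elim0⟩
  · intro h; exact ⟨fun v => (h.false v).elim, fun c => c.elim0⟩

private lemma dichromatic_le_one_iff {V : Type*} [Fintype V] {Adj : V → V → Prop} :
    dichromaticNumber Adj ≤ 1 ↔ ¬ ∃ l : List V, IsDicycle Adj l := by
  rw [dichromatic_le_iff]
  constructor
  · rintro ⟨f, hf⟩ ⟨l, hl⟩
    have hne : l ≠ [] := by
      have := hl.1; intro h; rw [h] at this; simp at this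
    exact hf (f (l.head hne)) ⟨l, fun v _ => Subsingleton.elim (f v) _, hl⟩
  · intro h
    exact ⟨fun _ => 0, fun c ⟨l, _, hl⟩ => h ⟨l, hl⟩⟩

private lemma dicycle_step {V : Type*} {Adj : V → V → Prop} {l : List V}
    (hl : IsDicycle Adj l) (i : ℕ) (h1 : i % l.length < l.length)
    (h2 : (i + 1) % l.length < l.length) :
    Adj l[i % l.length] l[(i + 1) % l.length] := by
  obtain ⟨hlen, -, hchain, hclose⟩ := hl
  have hpos : 0 < l.length := by omega
  have hne : l ≠ [] := List.length_pos_iff.mp hpos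
  have hone : 1 % l.length = 1 := Nat.mod_eq_of_lt (by omega)
  have hmod : (i + 1) % l.length = (i % l.length + 1) % l.length := by
    conv_lhs => rw [Nat.add_mod, hone]
  rcases Nat.lt_or_ge (i % l.length + 1) l.length with hlt | hge
  · have he : (i + 1) % l.length = i % l.length + 1 := by
      rw [hmod, Nat.mod_eq_of_lt hlt]
    have := List.isChain_iff_getElem.mp hchain (i % l.length) (by omega)
    convert this using 2
  · have hma : i % l.length = l.length - 1 := by omega
    have he : (i + 1) % l.length = 0 := by
      rw [hmod, hma, Nat.sub_add_cancel hpos, Nat.mod_self]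
    have := hclose hne
    rw [List.getLast_eq_getElem, List.head_eq_getElem_zero hne] at this
    convert this using 2

private lemma getElem_congr' {α : Type*} (l : List α) {m k : ℕ} (hm : m < l.length)
    (hk : k < l.length) (h : m = k) : l[m]'hm = l[k]'hk := by subst h; rfl

private lemma product_dicycle {V W : Type*} {GA : V → V → Prop} {HA : W → W → Prop}
    {lG : List V} {lH : List W} (hG : IsDicycle GA lG) (hH : IsDicycle HA lH) :
    ∃ L : List (V × W), IsDicycle (directAdj GA HA) L := by
  have ha2 : 2 ≤ lG.length := hG.1
  have hb2 : 2 ≤ lH.length := hH.1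
  have ha0 : 0 < lG.length := by omega
  have hb0 : 0 < lH.length := by omega
  set a := lG.length with hadef
  set b := lH.length with hbdef
  set n := Nat.lcm a b with hndef
  have hna : a ∣ n := Nat.dvd_lcm_left a b
  have hnb : b ∣ n := Nat.dvd_lcm_right a b
  have hn0 : 0 < n := Nat.pos_of_ne_zero (Nat.lcm_ne_zero (by omega) (by omega))
  have hn2 : 2 ≤ n := le_trans ha2 (Nat.le_of_dvd hn0 hna)
  set P : ℕ → V × W :=
    fun i => (lG[i % a]'(Nat.mod_lt _ ha0), lH[i % b]'(Nat.mod_lt _ hb0)) with hP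
  have hstep : ∀ i : ℕ, directAdj GA HA (P i) (P (i + 1)) := by
    intro i
    exact ⟨dicycle_step hG i (Nat.mod_lt _ ha0) (Nat.mod_lt _ ha0),
      dicycle_step hH i (Nat.mod_lt _ hb0) (Nat.mod_lt _ hb0)⟩
  refine ⟨(List.range n).map P, ?_, ?_, ?_, ?_⟩
  · simpa using hn2
  · apply List.Nodup.map_on ?_ (List.nodup_range (n := n))
    intro i hi j hj hij
    simp only [List.mem_range] at hi hj
    rw [hP] at hij
    simp only [Prod.mk.injEq] at hij
    have e1 : i % a = j % a :=
      (List.Nodup.getElem_inj_iff hG.2.1).mp hij.1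
    have e2 : i % b = j % b :=
      (List.Nodup.getElem_inj_iff hH.2.1).mp hij.2
    rcases le_total i j with hle | hle
    · have d1 : a ∣ j - i := (Nat.modEq_iff_dvd' hle).mp e1
      have d2 : b ∣ j - i := (Nat.modEq_iff_dvd' hle).mp e2
      have := Nat.lcm_dvd d1 d2
      rcases Nat.eq_zero_or_pos (j - i) with h0 | hp
      · omega
      · have := Nat.le_of_dvd hp this; omega
    · have d1 : a ∣ i - j := (Nat.modEq_iff_dvd' hle).mp e1.symm
      have d2 : b ∣ i - j := (Nat.modEq_iff_dvd' hle).mp e2.symm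
      have := Nat.lcm_dvd d1 d2
      rcases Nat.eq_zero_or_pos (i - j) with h0 | hp
      · omega
      · have := Nat.le_of_dvd hp this; omega
  · refine List.isChain_iff_getElem.mpr ?_
    intro i hi
    simp only [List.length_map, List.length_range] at hi
    simp only [List.get_eq_getElem, List.getElem_map, List.getElem_range]
    exact hstep i
  · intro h
    have hLlen : ((List.range n).map P).length = n := by simp
    rw [List.getLast_eq_getElem, List.head_eq_getElem_zero h]
    have h1 : ((List.range n).map P).length - 1 < n := by omega
    simp only [List.getElem_map, List.getElem_range, hLlen]
    have := hstep (n - 1)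
    have hm : n - 1 + 1 = n := by omega
    rw [hm] at this
    have hPn : P n = P 0 := by
      rw [hP]
      exact Prod.ext
        (getElem_congr' lG _ _ (by rw [Nat.mod_eq_zero_of_dvd hna, Nat.zero_mod]))
        (getElem_congr' lH _ _ (by rw [Nat.mod_eq_zero_of_dvd hnb, Nat.zero_mod]))
    rw [hPn] at this
    exact this

theorem stmt4 {V W : Type*} [Fintype V] [Fintype W]
    (GA : V → V → Prop) (HA : W → W → Prop)
    (hG : Irreflexive GA) (hH : Irreflexive HA)
    (hmin : min (dichromaticNumber GA) (dichromaticNumber HA) = dichromaticNumber GA)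
    (h2 : dichromaticNumber GA ≤ 2) :
    dichromaticNumber (directAdj GA HA) = dichromaticNumber GA := by
  have hGH : dichromaticNumber GA ≤ dichromaticNumber HA := min_eq_left_iff.mp hmin
  -- Upper bound
  have hub : dichromaticNumber (directAdj GA HA) ≤ dichromaticNumber GA := by
    rw [dichromatic_le_iff]
    obtain ⟨f, hf⟩ := Nat.sInf_mem (colorSet_nonempty GA)
    refine ⟨f ∘ Prod.fst, fun c => ?_⟩
    rintro ⟨L, hLS, hL⟩
    apply hf c
    have hlen : 2 ≤ (L.map Prod.fst).length := by simpa using hL.1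
    have hLne : L ≠ [] := by
      have := hL.1; intro h; rw [h] at this; simp at this
    have hMne : L.map Prod.fst ≠ [] := by simp [hLne]
    apply closedWalk_to_dicycle hG (f ⁻¹' {c}) (L.map Prod.fst).length
      (L.map Prod.fst) le_rfl hlen
    · intro v hv
      simp only [List.mem_map] at hv
      obtain ⟨p, hp, rfl⟩ := hv
      exact hLS p hp
    · exact (List.isChain_map _).mpr (hL.2.2.1.imp fun p q h => h.1)
    · intro h
      have := hL.2.2.2 hLne
      rw [List.getLast_map, List.head_map]
      exact this.1
  -- Lower bound, case analysis on the value of the dichromatic number of G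
  have hcases : dichromaticNumber GA = 0 ∨ dichromaticNumber GA = 1 ∨
      dichromaticNumber GA = 2 := by omega
  rcases hcases with h0 | h1 | hv2
  · omega
  · have hVne : ¬ IsEmpty V := by
      rw [← dichromatic_le_zero_iff (Adj := GA)]; omega
    have hWne : ¬ IsEmpty W := by
      rw [← dichromatic_le_zero_iff (Adj := HA)]; omega
    have hVW : ¬ IsEmpty (V × W) := by
      rw [not_isEmpty_iff] at hVne hWne ⊢
      exact ⟨(hVne.some, hWne.some)⟩
    have : ¬ dichromaticNumber (directAdj GA HA) ≤ 0 := by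
      rw [dichromatic_le_zero_iff]; exact hVW
    omega
  · have hGc : ¬ dichromaticNumber GA ≤ 1 := by omega
    have hHc : ¬ dichromaticNumber HA ≤ 1 := by omega
    rw [dichromatic_le_one_iff, not_not] at hGc hHc
    obtain ⟨lG, hlG⟩ := hGc
    obtain ⟨lH, hlH⟩ := hHc
    obtain ⟨L, hL⟩ := product_dicycle hlG hlH
    have : ¬ dichromaticNumber (directAdj GA HA) ≤ 1 := by
      rw [dichromatic_le_one_iff, not_not]
      exact ⟨L, hL⟩
    omega
end

section
/- Let G and H be digraphs and let (w_1, …, w_t) with w_i = (u_i, x_i) be a directed cycle in the strong product G ⊠ H (respectively, in the cartesian product G □ H). If the set U = {u_1, …, u_t} has more than one element, then the subdigraph of G induced on U contains a directed cycle. -/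
private noncomputable def dd {V : Type*} : List V → List V
  | [] => []
  | [a] => [a]
  | a :: b :: r => @ite _ (a = b) (Classical.dec _) (dd (b :: r)) (a :: dd (b :: r))

private theorem dd_sub {V : Type*} : ∀ (m : List V), ∀ v ∈ dd m, v ∈ m
  | [] => by simp [dd]
  | [a] => by simp [dd]
  | a :: b :: r => by
    intro v hv
    by_cases h : a = b
    · simp only [dd, if_pos h] at hv
      exact List.mem_cons_of_mem a (dd_sub (b :: r) v hv)
    · simp only [dd, if_neg h, List.mem_cons] at hv
      rcases hv with rfl | hv
      · exact List.mem_cons_self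
      · exact List.mem_cons_of_mem a (dd_sub (b :: r) v hv)

private theorem sub_dd {V : Type*} : ∀ (m : List V), ∀ v ∈ m, v ∈ dd m
  | [] => by simp
  | [a] => by simp [dd]
  | a :: b :: r => by
    intro v hv
    by_cases h : a = b
    · simp only [dd, if_pos h]
      rcases List.mem_cons.mp hv with rfl | hv
      · exact sub_dd (b :: r) v (by simp [h])
      · exact sub_dd (b :: r) v hv
    · simp only [dd, if_neg h, List.mem_cons]
      rcases List.mem_cons.mp hv with rfl | hv
      · exact Or.inl rfl
      · exact Or.inr (sub_dd (b :: r) v hv)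

private theorem dd_head? {V : Type*} : ∀ (m : List V), (dd m).head? = m.head?
  | [] => rfl
  | [a] => rfl
  | a :: b :: r => by
    by_cases h : a = b
    · simp only [dd, if_pos h]
      rw [dd_head? (b :: r)]
      simp [h]
    · simp [dd, if_neg h]

private theorem dd_ne_nil {V : Type*} {m : List V} (h : m ≠ []) : dd m ≠ [] := by
  intro hc
  have := dd_head? m
  rw [hc] at this
  cases m with
  | nil => exact h rfl
  | cons a t => simp at this

private theorem dd_getLast? {V : Type*} : ∀ (m : List V), (dd m).getLast? = m.getLast?
  | [] => rfl
  | [a] => rfl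
  | a :: b :: r => by
    by_cases h : a = b
    · simp only [dd, if_pos h]
      rw [dd_getLast? (b :: r)]
      simp [List.getLast?_cons_cons]
    · simp only [dd, if_neg h]
      obtain ⟨y, ys, hy⟩ := List.exists_cons_of_ne_nil (dd_ne_nil (m := b :: r) (by simp))
      rw [hy, List.getLast?_cons_cons, ← hy, dd_getLast? (b :: r)]
      simp [List.getLast?_cons_cons]

private theorem dd_chain {V : Type*} {GA : V → V → Prop} :
    ∀ (m : List V), m.Chain' (fun u v => u = v ∨ GA u v) → (dd m).Chain' GA
  | [] => by intro _; exact List.isChain_nil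
  | [a] => by intro _; exact List.isChain_singleton a
  | a :: b :: r => by
    intro h
    obtain ⟨hab, htail⟩ := List.isChain_cons_cons.mp h
    by_cases hab' : a = b
    · simp only [dd, if_pos hab']
      exact dd_chain (b :: r) htail
    · simp only [dd, if_neg hab']
      refine List.isChain_cons.mpr ⟨?_, dd_chain (b :: r) htail⟩
      intro y hy
      rw [dd_head? (b :: r)] at hy
      simp only [List.head?_cons, Option.mem_def, Option.some.injEq] at hy
      subst hy
      exact hab.resolve_left hab'

private theorem two_le_len {V : Type*} {m : List V} {u v : V}
    (hu : u ∈ m) (hv : v ∈ m) (huv : u ≠ v) : 2 ≤ m.length := by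
  match m with
  | [] => simp at hu
  | [a] => simp at hu hv; exact absurd (hu.trans hv.symm) huv
  | a :: b :: r => simp

private theorem not_nodup_decomp {V : Type*} :
    ∀ {m : List V}, ¬ m.Nodup → ∃ (a : List V) (x : V) (b c : List V),
      m = a ++ x :: b ++ x :: c := by
  intro m
  induction m with
  | nil => intro h; exact absurd List.nodup_nil h
  | cons y t ih =>
    intro h
    rw [List.nodup_cons] at h
    push_neg at h
    by_cases hyt : y ∈ t
    · obtain ⟨b, c, rfl⟩ := List.append_of_mem hyt
      exact ⟨[], y, b, c, rfl⟩
    · obtain ⟨a, x, b, c, rfl⟩ := ih (h hyt)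
      exact ⟨y :: a, x, b, c, rfl⟩

private theorem extract {V : Type*} {GA : V → V → Prop} (hG : Irreflexive GA) :
    ∀ (n : ℕ) (m : List V), m.length ≤ n → 2 ≤ m.length → m.Chain' GA →
    (∀ h : m ≠ [], GA (m.getLast h) (m.head h)) →
    ∃ l, (∀ v ∈ l, v ∈ m) ∧ IsDicycle GA l := by
  intro n
  induction n with
  | zero => intro m h1 h2 _ _; omega
  | succ n ih =>
    intro m hlen h2 hchain hwrap
    by_cases hnd : m.Nodup
    · exact ⟨m, fun v hv => hv, h2, hnd, hchain, hwrap⟩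
    · obtain ⟨a, x, b, c, hm⟩ := not_nodup_decomp hnd
      have hm' : m = a ++ ((x :: b) ++ (x :: c)) := by simpa using hm
      have hchain2 : ((x :: b) ++ (x :: c)).Chain' GA := by
        rw [hm'] at hchain
        exact (List.isChain_append.mp hchain).2.1
      have h3 := List.isChain_append.mp hchain2
      have hcb : (x :: b).Chain' GA := h3.1
      have harc : GA ((x :: b).getLast (by simp)) x := by
        refine h3.2.2 _ ?_ x (by simp)
        simp [List.getLast?_eq_getLast]
      have hbne : b ≠ [] := by
        rintro rfl
        simp only [List.getLast_singleton] at harc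
        exact hG x harc
      have hlb : 2 ≤ (x :: b).length := by
        cases b with
        | nil => exact absurd rfl hbne
        | cons _ _ => simp
      have hln : (x :: b).length ≤ n := by
        rw [hm'] at hlen
        simp only [List.length_append, List.length_cons] at hlen ⊢
        omega
      obtain ⟨l, hl1, hl2⟩ := ih (x :: b) hln hlb hcb (fun _ => harc)
      refine ⟨l, fun v hv => ?_, hl2⟩
      have := hl1 v hv
      rw [hm']
      simp only [List.mem_cons, List.mem_append] at this ⊢
      tauto

private theorem main {V W : Type*} (GA : V → V → Prop) (HA : W → W → Prop)
    (hG : Irreflexive GA)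
    (l : List (V × W))
    (hU : Set.Nontrivial {v : V | v ∈ l.map Prod.fst})
    (hc : IsDicycle (strongAdj GA HA) l) :
    ∃ lG : List V, (∀ v ∈ lG, v ∈ l.map Prod.fst) ∧ IsDicycle GA lG := by
  obtain ⟨hlen, hnd, hchain, hwrap⟩ := hc
  have hlne : l ≠ [] := by rintro rfl; simp at hlen
  set p := l.map Prod.fst with hp
  have hpne : p ≠ [] := by simp [hp, hlne]
  have hpchain : p.Chain' (fun u v => u = v ∨ GA u v) := by
    rw [hp, show List.Chain' _ (List.map Prod.fst l) = List.IsChain _ _ from rfl, List.isChain_map]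
    refine hchain.imp ?_
    rintro a b (⟨h, -⟩ | ⟨h, -⟩ | ⟨h, -⟩)
    · exact Or.inl h
    · exact Or.inr h
    · exact Or.inr h
  have hpwrap : (p.getLast hpne) = (p.head hpne) ∨ GA (p.getLast hpne) (p.head hpne) := by
    have h1 : p.getLast hpne = (l.getLast hlne).1 := List.getLast_map hpne
    have h2 : p.head hpne = (l.head hlne).1 := List.head_map hpne
    rw [h1, h2]
    rcases hwrap hlne with ⟨h, -⟩ | ⟨h, -⟩ | ⟨h, -⟩
    · exact Or.inl h
    · exact Or.inr h
    · exact Or.inr h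
  set m := dd p with hmdef
  have hmne : m ≠ [] := dd_ne_nil hpne
  have hmchain : m.Chain' GA := dd_chain p hpchain
  have hmsub : ∀ v ∈ m, v ∈ p := dd_sub p
  have hmhead : m.head hmne = p.head hpne := by
    have := dd_head? p
    rw [List.head?_eq_head hmne, List.head?_eq_head hpne] at this
    exact Option.some_injective _ this
  have hmlast : m.getLast hmne = p.getLast hpne := by
    have := dd_getLast? p
    rw [List.getLast?_eq_getLast hmne, List.getLast?_eq_getLast hpne] at this
    exact Option.some_injective _ this
  have hm2 : 2 ≤ m.length := by
    obtain ⟨u, hu, v, hv, huv⟩ := hU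
    exact two_le_len (sub_dd p u hu) (sub_dd p v hv) huv
  by_cases heq : m.getLast hmne = m.head hmne
  · -- drop the last element
    have hm3 : 3 ≤ m.length := by
      by_contra hcon
      have hl2 : m.length = 2 := by omega
      obtain ⟨a, b, hab⟩ := List.length_eq_two.mp hl2
      have h1 : m.getLast? = m.head? := by
        rw [List.getLast?_eq_getLast hmne, List.head?_eq_head hmne, heq]
      rw [hab] at h1 hmchain
      simp only [List.getLast?_cons_cons, List.getLast?_singleton, List.head?_cons,
        Option.some.injEq] at h1
      rw [show List.Chain' GA [a, b] = List.IsChain GA [a, b] from rfl, List.isChain_cons_cons] at hmchain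
      subst h1
      exact hG _ hmchain.1
    set m' := m.dropLast with hm'def
    have hm'len : m'.length = m.length - 1 := List.length_dropLast
    have hm'ne : m' ≠ [] := by
      intro hc'
      have := congrArg List.length hc'
      simp [hm'len] at this
      omega
    have hdec : m' ++ [m.getLast hmne] = m := List.dropLast_append_getLast hmne
    have hm'chain : m'.Chain' GA := hmchain.prefix ⟨[m.getLast hmne], hdec⟩
    have hm'head : m'.head hm'ne = m.head hmne := by
      have h1 : (m' ++ [m.getLast hmne]).head? = m'.head? :=
        List.head?_append_of_ne_nil _ hm'ne
      rw [hdec, List.head?_eq_head hmne, List.head?_eq_head hm'ne] at h1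
      exact (Option.some_injective _ h1).symm
    have hm'wrap : GA (m'.getLast hm'ne) (m'.head hm'ne) := by
      have hch := hmchain
      rw [← hdec] at hch
      have := (List.isChain_append.mp hch).2.2
      have harc := this (m'.getLast hm'ne) (by rw [List.getLast?_eq_getLast hm'ne]; rfl)
        (m.getLast hmne) (by simp)
      rwa [heq, ← hm'head] at harc
    obtain ⟨lG, h1, h2⟩ := extract hG m'.length m' le_rfl (by omega) hm'chain (fun _ => hm'wrap)
    exact ⟨lG, fun v hv => hmsub v ((List.dropLast_sublist m).subset (h1 v hv)), h2⟩
  · have hwrapG : GA (m.getLast hmne) (m.head hmne) := by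
      rw [hmhead, hmlast]
      rw [hmhead, hmlast] at heq
      exact hpwrap.resolve_left heq
    obtain ⟨lG, h1, h2⟩ := extract hG m.length m le_rfl hm2 hmchain (fun _ => hwrapG)
    exact ⟨lG, fun v hv => hmsub v (h1 v hv), h2⟩

theorem stmt17 {V W : Type*} (GA : V → V → Prop) (HA : W → W → Prop)
    (hG : Irreflexive GA) (hH : Irreflexive HA)
    (l : List (V × W))
    (hU : Set.Nontrivial {v : V | v ∈ l.map Prod.fst}) :
    (IsDicycle (strongAdj GA HA) l →
      ∃ lG : List V, (∀ v ∈ lG, v ∈ l.map Prod.fst) ∧ IsDicycle GA lG) ∧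
    (IsDicycle (cartAdj GA HA) l →
      ∃ lG : List V, (∀ v ∈ lG, v ∈ l.map Prod.fst) ∧ IsDicycle GA lG) := by
  constructor
  · exact main GA HA hG l hU
  · intro hc
    obtain ⟨h1, h2, h3, h4⟩ := hc
    refine main GA HA hG l hU ⟨h1, h2, h3.imp ?_, fun h => ?_⟩
    · rintro a b (h | h)
      · exact Or.inl h
      · exact Or.inr (Or.inl h)
    · rcases h4 h with h' | h'
      · exact Or.inl h'
      · exact Or.inr (Or.inl h')
end
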